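/- Let A ∈ ℍ^{M×N} be a quaternion matrix and let λ > 0, μ > 0 be reals. Define W* ∈ ℍ^{M×N} entrywise by W*(m,n) = 0 if |A(m,n)| ≤ λ/μ, and W*(m,n) = (1 − (λ/μ)/|A(m,n)|)·A(m,n) otherwise (the entrywise quaternion soft-thresholding of A with threshold λ/μ). Then W* is a global minimizer of the function f(W) = λ‖W‖₁ + (μ/2)‖W − A‖_F² over W ∈ ℍ^{M×N}, i.e., f(W*) ≤ f(W) for all W ∈ ℍ^{M×N}. -/

import Mathlib

open Matrix

/-- Frobenius norm of a quaternion matrix: `‖A‖_F = sqrt(Σ_{m,n} |A(m,n)|²)`. -/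
noncomputable def frob {M N : ℕ} (A : Matrix (Fin M) (Fin N) (Quaternion ℝ)) : ℝ :=
  Real.sqrt (∑ m : Fin M, ∑ n : Fin N, ‖A m n‖ ^ 2)

/-- ℓ₁ norm of a quaternion matrix: `‖A‖₁ = Σ_{m,n} |A(m,n)|`. -/
noncomputable def l1Norm {M N : ℕ} (A : Matrix (Fin M) (Fin N) (Quaternion ℝ)) : ℝ :=
  ∑ m : Fin M, ∑ n : Fin N, ‖A m n‖

lemma soft_key (lam μ : ℝ) (hlam : 0 < lam) (hμ : 0 < μ) (a w : Quaternion ℝ) :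
    lam * ‖(if ‖a‖ ≤ lam / μ then 0 else (1 - (lam / μ) / ‖a‖) • a : Quaternion ℝ)‖ +
      μ / 2 * ‖(if ‖a‖ ≤ lam / μ then 0 else (1 - (lam / μ) / ‖a‖) • a : Quaternion ℝ) - a‖ ^ 2 ≤
      lam * ‖w‖ + μ / 2 * ‖w - a‖ ^ 2 := by
  set t := lam / μ with htdef
  have ht : 0 < t := div_pos hlam hμ
  have hlamt : lam = μ * t := by rw [htdef]; field_simp
  have h1 : ‖a‖ - ‖w‖ ≤ ‖w - a‖ := by
    have := norm_sub_norm_le a w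
    rw [norm_sub_rev] at this; linarith
  have h2 : (‖a‖ - ‖w‖) ^ 2 ≤ ‖w - a‖ ^ 2 := by
    have h3 := abs_norm_sub_norm_le a w
    rw [norm_sub_rev] at h3
    nlinarith [abs_nonneg (‖a‖ - ‖w‖), sq_abs (‖a‖ - ‖w‖)]
  have hw0 : (0:ℝ) ≤ ‖w‖ := norm_nonneg _
  have hwa0 : (0:ℝ) ≤ ‖w - a‖ := norm_nonneg _
  by_cases hc : ‖a‖ ≤ lam / μ
  · simp only [show ‖a‖ ≤ t from hc, if_true, norm_zero, zero_sub, norm_neg]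
    nlinarith [norm_nonneg a, mul_nonneg (mul_nonneg hμ.le (sub_nonneg.mpr hc)) hw0,
      mul_nonneg (mul_nonneg hμ.le hw0) hw0]
  · simp only [show ¬ ‖a‖ ≤ t from hc, if_false]
    push_neg at hc
    have ha0 : (0:ℝ) < ‖a‖ := lt_trans ht hc
    have hcoef : 0 ≤ 1 - (lam / μ) / ‖a‖ := by
      have : (lam / μ) / ‖a‖ < 1 := (div_lt_one ha0).mpr hc
      linarith
    have hn1 : ‖(1 - (lam / μ) / ‖a‖) • a‖ = ‖a‖ - lam / μ := by
      rw [norm_smul, Real.norm_eq_abs, abs_of_nonneg hcoef]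
      field_simp
    have hsub : (1 - (lam / μ) / ‖a‖) • a - a = ((lam / μ) / ‖a‖) • (-a) := by
      module
    have hn2 : ‖(1 - (lam / μ) / ‖a‖) • a - a‖ = lam / μ := by
      rw [hsub, norm_smul, Real.norm_eq_abs, norm_neg,
        abs_of_nonneg (le_of_lt (div_pos ht ha0))]
      field_simp
      rw [hlamt]; ring
    rw [hn1, hn2]
    nlinarith [mul_nonneg hμ.le (sq_nonneg (‖w‖ - ‖a‖ + t))]

/-- The entrywise quaternion soft-thresholding of `A` with threshold `λ/μ` is a
global minimizer of `W ↦ λ‖W‖₁ + (μ/2)‖W − A‖_F²`. -/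
theorem soft_threshold_matrix_minimizer (M N : ℕ)
    (A : Matrix (Fin M) (Fin N) (Quaternion ℝ))
    (lam μ : ℝ) (hlam : 0 < lam) (hμ : 0 < μ)
    (Wstar : Matrix (Fin M) (Fin N) (Quaternion ℝ))
    (hWstar : ∀ (m : Fin M) (n : Fin N),
      Wstar m n = if ‖A m n‖ ≤ lam / μ then 0
        else (1 - (lam / μ) / ‖A m n‖) • A m n) :
    ∀ W : Matrix (Fin M) (Fin N) (Quaternion ℝ),
      lam * l1Norm Wstar + μ / 2 * frob (Wstar - A) ^ 2 ≤
        lam * l1Norm W + μ / 2 * frob (W - A) ^ 2 := by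
  intro W
  have hfrob : ∀ B : Matrix (Fin M) (Fin N) (Quaternion ℝ),
      frob B ^ 2 = ∑ m : Fin M, ∑ n : Fin N, ‖B m n‖ ^ 2 := by
    intro B
    refine Real.sq_sqrt ?_
    exact Finset.sum_nonneg fun m _ => Finset.sum_nonneg fun n _ => sq_nonneg _
  rw [hfrob, hfrob, l1Norm, l1Norm]
  simp only [Matrix.sub_apply, Finset.mul_sum]
  rw [← Finset.sum_add_distrib, ← Finset.sum_add_distrib]
  refine Finset.sum_le_sum fun m _ => ?_
  rw [← Finset.sum_add_distrib, ← Finset.sum_add_distrib]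
  refine Finset.sum_le_sum fun n _ => ?_
  rw [hWstar m n]
  exact soft_key lam μ hlam hμ (A m n) (W m n)
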